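/- Let Z be a finite set of points in P^n such that for every positive dimensional linear subspace H of P^n we have (|Z ∩ H| - 1)/dim H ≤ (|Z| - 1)/n. Then for every integer d ≥ 0, the modified expected number of conditions Ex.C(Z,d), defined as the minimum over all finite covers of Z by nonempty linear subspaces H_0,...,H_s of the quantity ∑_i (d·dim(H_i) + 1), equals min{|Z|, nd + 1}. -/
import Mathlib


open Module
open scoped LinearAlgebra.Projectivization

/-- The modified expected number of conditions `Ex.C(Z, d)`: the minimum over all covers of
`Z` by nonempty linear subspaces `H_0,...,H_s` of `ℙ^n` of `∑_i (d · dim H_i + 1)`, where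
`dim` is projective dimension (so a subspace corresponds to a nonzero submodule `H` with
projective dimension `finrank H - 1`). -/
noncomputable def ExC {K : Type*} [Field K] {V : Type*} [AddCommGroup V] [Module K V]
    (Z : Finset (ℙ K V)) (d : ℕ) : ℕ :=
  sInf {m : ℕ | ∃ s : Finset (Submodule K V), (∀ H ∈ s, H ≠ ⊥) ∧
    (∀ z ∈ Z, ∃ H ∈ s, Projectivization.submodule z ≤ H) ∧
    m = ∑ H ∈ s, (d * (Module.finrank K H - 1) + 1)}

/-- Arithmetic core of the lower bound. -/
lemma stmt7_arith (n c t S d : ℕ) (hn : 1 ≤ n) (hc : 1 ≤ c) (ht : 1 ≤ t)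
    (hkey : n * c ≤ n * t + (c - 1) * S) :
    min c (n * d + 1) ≤ d * S + t := by
  by_contra h
  push_neg at h
  have h1 : d * S + t ≤ c - 1 := by omega
  have h2 : d * S + t ≤ n * d := by omega
  obtain ⟨c', rfl⟩ : ∃ c', c = c' + 1 := ⟨c - 1, by omega⟩
  simp only [Nat.add_sub_cancel] at h1 hkey
  -- move to integers
  have h1' : (d : ℤ) * S + t ≤ c' := by exact_mod_cast h1
  have h2' : (d : ℤ) * S + t ≤ n * d := by exact_mod_cast h2
  have hkey' : (n : ℤ) * (c' + 1) ≤ n * t + c' * S := by exact_mod_cast hkey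
  have hS : (0 : ℤ) ≤ S := by positivity
  have hSn : (S : ℤ) ≤ n - 1 := by
    by_contra hcon
    push_neg at hcon
    have : (n : ℤ) ≤ S := by omega
    nlinarith [mul_le_mul_of_nonneg_left this (by positivity : (0:ℤ) ≤ (d:ℤ))]
  have hA : (0 : ℤ) ≤ ((c' : ℤ) - (d * S + t)) * ((n : ℤ) - S) := by
    apply mul_nonneg <;> omega
  have hB : (0 : ℤ) ≤ ((n : ℤ) * d - (d * S + t)) * S := by
    apply mul_nonneg <;> omega
  have hn' : (1 : ℤ) ≤ n := by exact_mod_cast hn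
  nlinarith [hA, hB, hkey']

/-- If a finite set of points `Z ⊆ ℙ^n` satisfies
`(|Z ∩ H| - 1)/dim H ≤ (|Z| - 1)/n` for every positive dimensional linear subspace `H`,
then `Ex.C(Z, d) = min{|Z|, n·d + 1}` for every `d ≥ 0`. -/
theorem stmt7 (K : Type*) [Field K] (n : ℕ) (hn : 0 < n)
    (Z : Finset (ℙ K (Fin (n + 1) → K)))
    (hbal : ∀ H : Submodule K (Fin (n + 1) → K), 2 ≤ Module.finrank K H →
      (Set.ncard {z ∈ (Z : Set (ℙ K (Fin (n + 1) → K))) |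
          Projectivization.submodule z ≤ H} - 1) * n ≤
        (Z.card - 1) * (Module.finrank K H - 1))
    (d : ℕ) :
    ExC Z d = min Z.card (n * d + 1) := by
  classical
  set T : Set ℕ := {m : ℕ | ∃ s : Finset (Submodule K (Fin (n+1) → K)),
    (∀ H ∈ s, H ≠ ⊥) ∧
    (∀ z ∈ Z, ∃ H ∈ s, Projectivization.submodule z ≤ H) ∧
    m = ∑ H ∈ s, (d * (Module.finrank K H - 1) + 1)} with hT
  have hExC : ExC Z d = sInf T := rfl
  -- membership of the top cover
  have htopne : (⊤ : Submodule K (Fin (n+1) → K)) ≠ ⊥ := by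
    intro h
    have : Module.finrank K (Fin (n+1) → K) = 0 := by
      rw [← finrank_top, h]; simp
    rw [Module.finrank_fin_fun] at this
    omega
  have htop : n * d + 1 ∈ T := by
    refine ⟨{⊤}, ?_, ?_, ?_⟩
    · intro H hH; simp at hH; subst hH; exact htopne
    · intro z hz; exact ⟨⊤, by simp⟩
    · rw [Finset.sum_singleton, finrank_top, Module.finrank_fin_fun]
      have h1 : n + 1 - 1 = n := by omega
      rw [h1]
      ring
  -- membership of the singleton cover
  have hsing : Z.card ∈ T := by
    refine ⟨Z.image Projectivization.submodule, ?_, ?_, ?_⟩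
    · intro H hH
      obtain ⟨z, _, rfl⟩ := Finset.mem_image.mp hH
      intro h
      have := z.finrank_submodule
      rw [h] at this
      simp at this
    · intro z hz
      exact ⟨z.submodule, Finset.mem_image_of_mem _ hz, le_rfl⟩
    · rw [Finset.sum_image (fun a _ b _ h => Projectivization.submodule_injective h)]
      simp [Projectivization.finrank_submodule]
  have hTne : T.Nonempty := ⟨_, htop⟩
  -- lower bound for every element of T
  have hlb : ∀ m ∈ T, min Z.card (n * d + 1) ≤ m := by
    rintro m ⟨s, hne, hcov, rfl⟩
    rcases Z.eq_empty_or_nonempty with rfl | hZne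
    · simp
    -- s is nonempty
    obtain ⟨z0, hz0⟩ := hZne
    obtain ⟨H0, hH0, -⟩ := hcov z0 hz0
    have hsne : s.Nonempty := ⟨H0, hH0⟩
    -- split the sum
    have hsum : ∑ H ∈ s, (d * (Module.finrank K H - 1) + 1)
        = d * (∑ H ∈ s, (Module.finrank K H - 1)) + s.card := by
      rw [Finset.sum_add_distrib, ← Finset.mul_sum]
      simp
    rw [hsum]
    set S := ∑ H ∈ s, (Module.finrank K H - 1) with hS
    -- the key counting inequality
    have hcount : Z.card ≤ ∑ H ∈ s, (Z.filter (fun z => z.submodule ≤ H)).card := by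
      calc Z.card ≤ (s.biUnion (fun H => Z.filter (fun z => z.submodule ≤ H))).card := by
            apply Finset.card_le_card
            intro z hz
            obtain ⟨H, hH, hle⟩ := hcov z hz
            exact Finset.mem_biUnion.mpr ⟨H, hH, Finset.mem_filter.mpr ⟨hz, hle⟩⟩
        _ ≤ _ := Finset.card_biUnion_le
    have hterm : ∀ H ∈ s, n * (Z.filter (fun z => z.submodule ≤ H)).card
        ≤ n + (Z.card - 1) * (Module.finrank K H - 1) := by
      intro H hH
      set a := (Z.filter (fun z => z.submodule ≤ H)).card with ha
      rcases le_or_gt 2 (Module.finrank K H) with h2 | h2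
      · have hb := hbal H h2
        have hncard : Set.ncard {z ∈ (Z : Set (ℙ K (Fin (n+1) → K))) |
            Projectivization.submodule z ≤ H} = a := by
          rw [ha, ← Set.ncard_coe_finset, Finset.coe_filter]
          simp
        rw [hncard] at hb
        have : n * a ≤ n + (a - 1) * n := by
          calc n * a ≤ n * (1 + (a - 1)) := Nat.mul_le_mul_left n (by omega)
            _ = n + (a - 1) * n := by ring
        omega
      · -- finrank H = 1, so at most one point
        have hfr : Module.finrank K H = 1 := by
          have : Module.finrank K H ≠ 0 := by
            intro h0
            exact hne H hH (Submodule.finrank_eq_zero.mp h0)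
          omega
        have ha1 : a ≤ 1 := by
          rw [ha]
          apply Finset.card_le_one.mpr
          intro z hz w hw
          have hz' := (Finset.mem_filter.mp hz).2
          have hw' := (Finset.mem_filter.mp hw).2
          have hzH : z.submodule = H :=
            Submodule.eq_of_le_of_finrank_eq hz'
              (by rw [hfr, Projectivization.finrank_submodule])
          have hwH : w.submodule = H :=
            Submodule.eq_of_le_of_finrank_eq hw'
              (by rw [hfr, Projectivization.finrank_submodule])
          exact Projectivization.submodule_injective (hzH.trans hwH.symm)
        calc n * a ≤ n * 1 := Nat.mul_le_mul_left n ha1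
          _ ≤ n + (Z.card - 1) * (Module.finrank K H - 1) := by omega
    have hkey : n * Z.card ≤ n * s.card + (Z.card - 1) * S := by
      calc n * Z.card ≤ n * ∑ H ∈ s, (Z.filter (fun z => z.submodule ≤ H)).card :=
            Nat.mul_le_mul_left n hcount
        _ = ∑ H ∈ s, n * (Z.filter (fun z => z.submodule ≤ H)).card := by
            rw [Finset.mul_sum]
        _ ≤ ∑ H ∈ s, (n + (Z.card - 1) * (Module.finrank K H - 1)) :=
            Finset.sum_le_sum hterm
        _ = n * s.card + (Z.card - 1) * S := by
            rw [Finset.sum_add_distrib, ← Finset.mul_sum, hS,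
              Finset.sum_const, smul_eq_mul]
            ring
    exact stmt7_arith n Z.card s.card S d hn (Finset.card_pos.mpr ⟨z0, hz0⟩)
      (Finset.card_pos.mpr hsne) hkey
  -- conclude
  rw [hExC]
  apply le_antisymm
  · rcases le_total Z.card (n * d + 1) with h | h
    · rw [min_eq_left h]; exact Nat.sInf_le hsing
    · rw [min_eq_right h]; exact Nat.sInf_le htop
  · exact hlb _ (Nat.sInf_mem hTne)
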